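/- Suppose a(t) ≥ 0 and c(t) ≤ 0 on [t₀,∞), with a and c continuous and b continuous. If x₀ solves x' + a(t)x² + b(t)x + c(t) = 0 on [t₀,∞) with x₀(t₀) > 0, then x₀(t) > 0 for all t ≥ t₀. -/

import Mathlib

open Set Real

theorem stmt2 (t₀ : ℝ) (a b c x₀ : ℝ → ℝ)
    (ha : ContinuousOn a (Ici t₀)) (hb : ContinuousOn b (Ici t₀))
    (hc : ContinuousOn c (Ici t₀))
    (ha0 : ∀ t ≥ t₀, 0 ≤ a t) (hc0 : ∀ t ≥ t₀, c t ≤ 0)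
    (hx : ∀ t ≥ t₀, HasDerivAt x₀ (-(a t * x₀ t ^ 2 + b t * x₀ t + c t)) t)
    (hx0 : 0 < x₀ t₀) :
    ∀ t ≥ t₀, 0 < x₀ t := by
  by_contra h
  push_neg at h
  obtain ⟨t₁, ht₁, ht₁0⟩ := h
  -- x₀ is continuous on [t₀, ∞)
  have hxc : ContinuousOn x₀ (Ici t₀) := fun t ht =>
    ((hx t ht).continuousAt).continuousWithinAt
  set S : Set ℝ := Icc t₀ t₁ ∩ x₀ ⁻¹' (Iic 0) with hS
  have hScl : IsClosed S :=
    (hxc.mono (Icc_subset_Ici_self)).preimage_isClosed_of_isClosed isClosed_Icc isClosed_Iic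
  have hScomp : IsCompact S :=
    isCompact_Icc.of_isClosed_subset hScl inter_subset_left
  have hSne : S.Nonempty := ⟨t₁, ⟨ht₁, le_rfl⟩, ht₁0⟩
  set t₂ := sInf S with ht₂def
  have ht₂S : t₂ ∈ S := hScomp.sInf_mem hSne
  obtain ⟨⟨ht₂l, ht₂r⟩, ht₂0⟩ := ht₂S
  have ht₂gt : t₀ < t₂ := by
    rcases lt_or_eq_of_le ht₂l with h | h
    · exact h
    · exact absurd (h ▸ ht₂0) (not_le.2 hx0)
  -- on [t₀, t₂), x₀ > 0
  have hpos : ∀ t ∈ Ico t₀ t₂, 0 < x₀ t := by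
    intro t ⟨h1, h2⟩
    by_contra hle
    push_neg at hle
    have : t ∈ S := ⟨⟨h1, le_trans (le_of_lt h2) ht₂r⟩, hle⟩
    exact absurd (csInf_le hScomp.bddBelow this) (not_le.2 h2)
  -- bound M on |a t * x₀ t + b t| on [t₀, t₂]
  have hIcc : Icc t₀ t₂ ⊆ Ici t₀ := Icc_subset_Ici_self
  have hcont : ContinuousOn (fun t => |a t * x₀ t + b t|) (Icc t₀ t₂) :=
    (((ha.mono hIcc).mul (hxc.mono hIcc)).add (hb.mono hIcc)).abs
  obtain ⟨M, hM⟩ := (isCompact_Icc.image_of_continuousOn hcont).bddAbove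
  have hMb : ∀ t ∈ Icc t₀ t₂, |a t * x₀ t + b t| ≤ M := fun t ht =>
    hM (mem_image_of_mem _ ht)
  -- apply Grönwall to f = -x₀ with K = -M, ε = 0, δ = -x₀ t₀
  have key := le_gronwallBound_of_liminf_deriv_right_le
    (f := fun t => -x₀ t) (f' := fun t => a t * x₀ t ^ 2 + b t * x₀ t + c t)
    (δ := -x₀ t₀) (K := -M) (ε := 0) (a := t₀) (b := t₂)
    ((hxc.mono hIcc).neg)
    (fun t ht r hr => by
      have hd : HasDerivWithinAt (fun t => -x₀ t)
          (a t * x₀ t ^ 2 + b t * x₀ t + c t) (Ici t) t := by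
        have h' := ((hx t ht.1).hasDerivWithinAt (s := Ici t)).neg
        rw [neg_neg] at h'
        exact h'
      exact hd.liminf_right_slope_le hr)
    (le_refl _)
    (fun t ht => by
      have htI : t ∈ Icc t₀ t₂ := ⟨ht.1, le_of_lt ht.2⟩
      have hxp : 0 < x₀ t := hpos t ht
      have h1 : a t * x₀ t ^ 2 + b t * x₀ t + c t ≤ (a t * x₀ t + b t) * x₀ t := by
        have := hc0 t ht.1
        nlinarith
      have h2 : (a t * x₀ t + b t) * x₀ t ≤ M * x₀ t :=
        mul_le_mul_of_nonneg_right (le_trans (le_abs_self _) (hMb t htI)) (le_of_lt hxp)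
      have : -M * -x₀ t + 0 = M * x₀ t := by ring
      rw [this]
      show a t * x₀ t ^ 2 + b t * x₀ t + c t ≤ M * x₀ t
      linarith)
  have := key t₂ ⟨le_of_lt ht₂gt, le_rfl⟩
  rw [gronwallBound_ε0] at this
  have hexp : (0:ℝ) < Real.exp (-M * (t₂ - t₀)) := Real.exp_pos _
  have hx2 : x₀ t₂ ≤ 0 := ht₂0
  nlinarith [mul_pos hx0 hexp]
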